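/- Let G be a starlike tree on n vertices with central vertex u adjacent to one end of each of r ≥ 3 paths, where all but one path have an even number of vertices and n is even. Then exactly n/2 Laplacian eigenvalues of G are greater than or equal to 2. -/

import Mathlib

open scoped Classical

/-- Base relation for a starlike tree: the central vertex `Sum.inl ()` is adjacent to the
end (index `0`) of each of the `r` branches, and branch `i` is a path on `a i` vertices. -/
def starRel (r : ℕ) (a : Fin r → ℕ) :
    (Unit ⊕ (Σ i : Fin r, Fin (a i))) → (Unit ⊕ (Σ i : Fin r, Fin (a i))) → Prop
  | Sum.inl _, Sum.inr ⟨_, j⟩ => (j : ℕ) = 0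
  | Sum.inr ⟨i, j⟩, Sum.inr ⟨i', j'⟩ => (i : ℕ) = (i' : ℕ) ∧ (j : ℕ) + 1 = (j' : ℕ)
  | _, _ => False

/-- The starlike tree whose central vertex is adjacent to one end of each of the `r`
paths `P_{a 0}, …, P_{a (r-1)}`. -/
def starGraph (r : ℕ) (a : Fin r → ℕ) : SimpleGraph (Unit ⊕ (Σ i : Fin r, Fin (a i))) :=
  SimpleGraph.fromRel (starRel r a)

section LinAlgAux

set_option linter.unusedSectionVars false


open Polynomial Matrix

variable {m : Type*} [Fintype m] [DecidableEq m]

lemma charpoly_conj_eq {R : Type*} [CommRing R] (P A Q : Matrix m m R)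
    (h1 : P * Q = 1) : (P * A * Q).charpoly = A.charpoly := by
  have hmap : ∀ M : Matrix m m R, (C : R →+* R[X]).mapMatrix M = M.map C := fun _ => rfl
  have key : charmatrix (P * A * Q) =
      (P.map C) * charmatrix A * (Q.map C) := by
    unfold charmatrix
    rw [mul_sub, sub_mul]
    congr 1
    · have : (P.map (C : R →+* R[X])) * Matrix.scalar m (X : R[X]) = Matrix.scalar m (X : R[X]) * (P.map C) := by
        exact (Matrix.scalar_commute (X : R[X]) (Commute.all X) (P.map C)).symm
      rw [this, mul_assoc, ← Matrix.map_mul, h1]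
      simp
    · simp only [RingHom.mapMatrix_apply, Matrix.map_mul]
  rw [Matrix.charpoly, key, det_mul, det_mul, Matrix.charpoly]
  have : (P.map (C : R →+* R[X])).det * (Q.map C).det = 1 := by
    rw [mul_comm, ← det_mul, ← Matrix.map_mul]
    have h2 : Q * P = 1 := by
      have hu : IsUnit P := by
        have : IsUnit P.det := by
          have := congrArg det h1
          rw [det_mul, det_one] at this
          exact IsUnit.of_mul_eq_one _ this
        exact (Matrix.isUnit_iff_isUnit_det P).2 this
      calc Q * P = (P⁻¹ * P) * (Q * P) := by rw [Matrix.nonsing_inv_mul P ((Matrix.isUnit_iff_isUnit_det P).1 hu), one_mul]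
        _ = P⁻¹ * (P * Q) * P := by noncomm_ring
        _ = 1 := by rw [h1, mul_one, Matrix.nonsing_inv_mul P ((Matrix.isUnit_iff_isUnit_det P).1 hu)]
    rw [h2]; simp
  rw [mul_comm ((P.map (C : R →+* R[X])).det), mul_assoc, this, mul_one]

lemma charpoly_diagonal {R : Type*} [CommRing R] (d : m → R) :
    (diagonal d).charpoly = ∏ i, (X - C (d i)) := by
  have : charmatrix (diagonal d) = diagonal (fun i => (X : R[X]) - C (d i)) := by
    ext i j
    by_cases h : i = j
    · subst h; simp
    · simp [h, charmatrix_apply_ne _ _ _ h, diagonal_apply_ne _ h]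
  rw [Matrix.charpoly, this, det_diagonal]

lemma roots_charpoly_hermitian (A : Matrix m m ℝ) (hA : A.IsHermitian) :
    A.charpoly.roots = Finset.univ.val.map hA.eigenvalues := by
  classical
  have hU := hA.spectral_theorem
  have h1 : (hA.eigenvectorUnitary : Matrix m m ℝ) * (star (hA.eigenvectorUnitary : Matrix m m ℝ)) = 1 := by
    exact_mod_cast (Unitary.mul_star_self_of_mem (hA.eigenvectorUnitary).2)
  have : A.charpoly = (diagonal (RCLike.ofReal ∘ hA.eigenvalues) : Matrix m m ℝ).charpoly := by
    conv_lhs => rw [hU]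
    exact charpoly_conj_eq _ _ _ h1
  have hco : (RCLike.ofReal ∘ hA.eigenvalues : m → ℝ) = hA.eigenvalues := by
    funext i; simp
  rw [this, hco, _root_.charpoly_diagonal]
  rw [Finset.prod_eq_multiset_prod]
  rw [show (fun i => X - C (hA.eigenvalues i)) = (fun x : ℝ => X - C x) ∘ hA.eigenvalues from rfl,
    ← Multiset.map_map]
  exact roots_multiset_prod_X_sub_C _

open Matrix Module

variable {m : Type*} [Fintype m] [DecidableEq m]

/-- coordinate subspace spanned by `Pi.single i 1` for `i` satisfying `p`. -/
noncomputable def coordSpan (p : m → Prop) : Submodule ℝ (m → ℝ) :=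
  Submodule.span ℝ (Set.range (fun i : {i // p i} => Pi.single (i : m) (1:ℝ)))

lemma coordSpan_zero {p : m → Prop} {x : m → ℝ} (hx : x ∈ coordSpan p) {j : m} (hj : ¬ p j) :
    x j = 0 := by
  classical
  have : coordSpan p ≤
      LinearMap.ker (LinearMap.proj j : (m → ℝ) →ₗ[ℝ] ℝ) := by
    rw [coordSpan, Submodule.span_le]
    rintro _ ⟨i, rfl⟩
    simp only [SetLike.mem_coe, LinearMap.mem_ker, LinearMap.proj_apply]
    have hne : j ≠ (i : m) := fun h => hj (by rw [h]; exact i.2)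
    rw [Pi.single_apply, if_neg hne]
  exact this hx

lemma finrank_coordSpan (p : m → Prop) [DecidablePred p] :
    finrank ℝ (coordSpan p) = (Finset.univ.filter p).card := by
  classical
  have hli : LinearIndependent ℝ (fun i : {i // p i} => (Pi.single (i : m) (1:ℝ) : m → ℝ)) := by
    rw [Fintype.linearIndependent_iff]
    intro g hg i
    have hgi := congrFun hg (i : m)
    simp only [Finset.sum_apply, Pi.smul_apply, Pi.single_apply, smul_eq_mul, mul_ite, mul_one,
      mul_zero, Pi.zero_apply] at hgi
    simp only [show ∀ x : {i // p i}, ((i : m) = (x : m)) = (i = x) from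
      fun x => propext ⟨fun h => Subtype.ext h, fun h => congrArg _ h⟩] at hgi
    rwa [Finset.sum_ite_eq, if_pos (Finset.mem_univ i)] at hgi
  rw [coordSpan, finrank_span_eq_card hli]
  simp [Fintype.card_subtype]

lemma quad_diag (d x : m → ℝ) : x ⬝ᵥ (diagonal d *ᵥ x) = ∑ i, d i * (x i * x i) := by
  simp [dotProduct, mulVec_diagonal, mul_comm, mul_assoc, mul_left_comm]

lemma inertia_le (d₁ d₂ : m → ℝ) (B : Matrix m m ℝ) (hB : IsUnit B)
    (h : diagonal d₁ = Bᵀ * diagonal d₂ * B) :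
    (Finset.univ.filter (fun i => d₁ i < 0)).card ≤
      (Finset.univ.filter (fun i => d₂ i < 0)).card := by
  classical
  set U := coordSpan (fun i => d₁ i < 0) with hUdef
  obtain ⟨iB⟩ := hB.nonempty_invertible
  set e := B.toLinearEquiv' iB with he
  have he_apply : ∀ x, e x = B *ᵥ x := by
    intro x
    have := Matrix.toLinearEquiv'_apply B iB
    calc e x = (↑e : Module.End ℝ (m → ℝ)) x := rfl
      _ = Matrix.toLin' B x := by rw [this]
      _ = B *ᵥ x := by simp [Matrix.toLin'_apply]
  set W := Submodule.comap (e : (m → ℝ) →ₗ[ℝ] (m → ℝ)) (coordSpan (fun i => ¬ d₂ i < 0)) with hW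
  -- quadratic form identity
  have hq : ∀ x : m → ℝ, x ⬝ᵥ (diagonal d₁ *ᵥ x) = (B *ᵥ x) ⬝ᵥ (diagonal d₂ *ᵥ (B *ᵥ x)) := by
    intro x
    rw [h]
    simp only [← mulVec_mulVec, dotProduct_mulVec, vecMul_transpose]
  -- disjointness
  have hdisj : Disjoint U W := by
    rw [Submodule.disjoint_def]
    intro x hxU hxW
    by_contra hx0
    have hneg : x ⬝ᵥ (diagonal d₁ *ᵥ x) < 0 := by
      rw [quad_diag]
      obtain ⟨j, hj⟩ : ∃ j, x j ≠ 0 := by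
        by_contra hall
        push_neg at hall
        exact hx0 (funext hall)
      have hdj : d₁ j < 0 := by
        by_contra hd
        exact hj (coordSpan_zero hxU hd)
      have : ∀ i ∈ Finset.univ, d₁ i * (x i * x i) ≤ 0 := by
        intro i _
        by_cases hi : d₁ i < 0
        · exact mul_nonpos_of_nonpos_of_nonneg hi.le (mul_self_nonneg _)
        · rw [coordSpan_zero hxU hi]; simp
      have hlt : d₁ j * (x j * x j) < 0 :=
        mul_neg_of_neg_of_pos hdj (mul_self_pos.mpr hj)
      have hsum := Finset.sum_lt_sum this ⟨j, Finset.mem_univ j, hlt⟩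
      simpa using hsum
    have hpos : 0 ≤ x ⬝ᵥ (diagonal d₁ *ᵥ x) := by
      rw [hq, quad_diag]
      apply Finset.sum_nonneg
      intro i _
      by_cases hi : d₂ i < 0
      · have : (B *ᵥ x) i = 0 := by
          have hx' : e x ∈ coordSpan (fun i => ¬ d₂ i < 0) := hxW
          rw [he_apply] at hx'
          exact coordSpan_zero hx' (by simpa using hi)
        rw [this]; simp
      · push_neg at hi
        exact mul_nonneg hi (mul_self_nonneg _)
    exact absurd hpos (not_le.mpr hneg)
  -- dimension count
  have hUrank : finrank ℝ U = (Finset.univ.filter (fun i => d₁ i < 0)).card :=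
    finrank_coordSpan _
  have hWrank : finrank ℝ W = (Finset.univ.filter (fun i => ¬ d₂ i < 0)).card := by
    have : W = Submodule.map (e.symm : (m → ℝ) →ₗ[ℝ] (m → ℝ)) (coordSpan (fun i => ¬ d₂ i < 0)) := by
      rw [hW, Submodule.map_equiv_eq_comap_symm, LinearEquiv.symm_symm]
    rw [this, LinearEquiv.finrank_map_eq, finrank_coordSpan]
  have hsum := Submodule.finrank_sup_add_finrank_inf_eq U W
  rw [disjoint_iff.mp hdisj, finrank_bot, add_zero] at hsum
  have hle : finrank ℝ (U ⊔ W : Submodule ℝ (m → ℝ)) ≤ Fintype.card m := by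
    have := Submodule.finrank_le (U ⊔ W : Submodule ℝ (m → ℝ))
    rwa [finrank_fintype_fun_eq_card] at this
  have hcomp : (Finset.univ.filter (fun i => d₂ i < 0)).card +
      (Finset.univ.filter (fun i => ¬ d₂ i < 0)).card = Fintype.card m := by
    rw [Finset.card_filter_add_card_filter_not]
    rfl
  omega

lemma inertia_eq (d₁ d₂ : m → ℝ) (B : Matrix m m ℝ) (hB : IsUnit B)
    (h : diagonal d₁ = Bᵀ * diagonal d₂ * B) :
    (Finset.univ.filter (fun i => d₁ i < 0)).card =
      (Finset.univ.filter (fun i => d₂ i < 0)).card := by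
  classical
  refine le_antisymm (inertia_le d₁ d₂ B hB h) ?_
  have hdet : IsUnit B.det := (Matrix.isUnit_iff_isUnit_det B).1 hB
  have hB' : IsUnit B⁻¹ := (Matrix.isUnit_nonsing_inv_iff).2 hB
  apply inertia_le d₂ d₁ B⁻¹ hB'
  have h2 : diagonal d₂ = (B⁻¹)ᵀ * diagonal d₁ * B⁻¹ := by
    rw [h]
    rw [show (B⁻¹)ᵀ * (Bᵀ * diagonal d₂ * B) * B⁻¹
        = ((B⁻¹)ᵀ * Bᵀ) * diagonal d₂ * (B * B⁻¹) by noncomm_ring]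
    rw [← Matrix.transpose_mul, Matrix.mul_nonsing_inv B hdet]
    simp
  exact h2

end LinAlgAux

namespace StarAux

open Matrix

variable {r : ℕ} {a : Fin r → ℕ}

abbrev Vx (r : ℕ) (a : Fin r → ℕ) := Unit ⊕ (Σ i : Fin r, Fin (a i))

/-- diagonal entries of the congruent diagonal matrix -/
def dd : Vx r a → ℝ
  | Sum.inl _ => 0
  | Sum.inr ⟨i, j⟩ => if Even (a i - (j : ℕ)) then 1 else -1

/-- parent map towards the center -/
def pr : Vx r a → Option (Vx r a)
  | Sum.inl _ => none
  | Sum.inr ⟨i, j⟩ =>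
      if h : (j : ℕ) = 0 then some (Sum.inl ())
      else some (Sum.inr ⟨i, ⟨(j : ℕ) - 1, lt_of_le_of_lt (Nat.sub_le _ _) j.isLt⟩⟩)

/-- height above the leaves...: distance from the center (center = 0) -/
def ht : Vx r a → ℕ
  | Sum.inl _ => 0
  | Sum.inr ⟨_, j⟩ => (j : ℕ) + 1

lemma inr_eq_iff {i i' : Fin r} {j : Fin (a i)} {j' : Fin (a i')} :
    (Sum.inr ⟨i, j⟩ : Vx r a) = Sum.inr ⟨i', j'⟩ ↔ (i : ℕ) = (i' : ℕ) ∧ (j : ℕ) = (j' : ℕ) := by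
  constructor
  · intro h
    injection h with h'
    obtain ⟨h1, h2⟩ := Sigma.mk.inj_iff.mp h'
    subst h1
    rw [heq_iff_eq] at h2
    subst h2
    exact ⟨rfl, rfl⟩
  · rintro ⟨h1, h2⟩
    have hi : i = i' := Fin.ext h1
    subst hi
    have hj : j = j' := Fin.ext h2
    subst hj
    rfl

lemma pr_inr_zero {i : Fin r} {j : Fin (a i)} (h : (j : ℕ) = 0) :
    pr (Sum.inr ⟨i, j⟩ : Vx r a) = some (Sum.inl ()) := by
  simp [pr, h]

lemma pr_inr_pos {i : Fin r} {j : Fin (a i)} (h : (j : ℕ) ≠ 0) :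
    pr (Sum.inr ⟨i, j⟩ : Vx r a) =
      some (Sum.inr ⟨i, ⟨(j : ℕ) - 1, lt_of_le_of_lt (Nat.sub_le _ _) j.isLt⟩⟩) := by
  simp [pr, h]

lemma pr_eq_some_inl_iff {u : Vx r a} :
    pr u = some (Sum.inl ()) ↔ ∃ i : Fin r, ∃ j : Fin (a i), u = Sum.inr ⟨i, j⟩ ∧ (j : ℕ) = 0 := by
  constructor
  · intro h
    match u with
    | Sum.inl _ => simp [pr] at h
    | Sum.inr ⟨i, j⟩ =>
      refine ⟨i, j, rfl, ?_⟩
      by_contra hj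
      rw [pr_inr_pos hj] at h
      simp at h
  · rintro ⟨i, j, rfl, hj⟩
    exact pr_inr_zero hj

lemma pr_inr_eq_some_inr_iff {i i' : Fin r} {j : Fin (a i)} {j' : Fin (a i')} :
    pr (Sum.inr ⟨i, j⟩ : Vx r a) = some (Sum.inr ⟨i', j'⟩) ↔
      (i : ℕ) = (i' : ℕ) ∧ (j : ℕ) = (j' : ℕ) + 1 := by
  constructor
  · intro h
    by_cases hj : (j : ℕ) = 0
    · rw [pr_inr_zero hj] at h; simp at h
    · rw [pr_inr_pos hj] at h
      rw [Option.some_inj] at h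
      obtain ⟨h1, h2⟩ := inr_eq_iff.mp h
      exact ⟨h1, by simp at h2; omega⟩
  · rintro ⟨h1, h2⟩
    have hj : (j : ℕ) ≠ 0 := by omega
    rw [pr_inr_pos hj, Option.some_inj, inr_eq_iff]
    exact ⟨h1, by simp; omega⟩

lemma pr_ht {u v : Vx r a} (h : pr u = some v) : ht u = ht v + 1 := by
  match u with
  | Sum.inl _ => simp [pr] at h
  | Sum.inr ⟨i, j⟩ =>
    by_cases hj : (j : ℕ) = 0
    · rw [pr_inr_zero hj] at h
      rw [← Option.some_inj.mp h]
      simp [ht, hj]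
    · rw [pr_inr_pos hj] at h
      rw [← Option.some_inj.mp h]
      simp [ht]
      omega

lemma adj_iff {u v : Vx r a} :
    (starGraph r a).Adj u v ↔ pr u = some v ∨ pr v = some u := by
  rw [starGraph, SimpleGraph.fromRel_adj]
  match u, v with
  | Sum.inl _, Sum.inl _ =>
    constructor
    · rintro ⟨hne, h | h⟩ <;> exact absurd rfl hne
    · rintro (h | h) <;> simp [pr] at h
  | Sum.inl _, Sum.inr ⟨i, j⟩ =>
    have h1 : starRel r a (Sum.inl ()) (Sum.inr ⟨i, j⟩) = ((j : ℕ) = 0) := rfl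
    have h2 : starRel r a (Sum.inr ⟨i, j⟩) (Sum.inl ()) = False := rfl
    constructor
    · rintro ⟨hne, h | h⟩
      · right
        rw [h1] at h
        exact pr_inr_zero h
      · rw [h2] at h; exact absurd h (by simp)
    · rintro (h | h)
      · simp [pr] at h
      · rw [pr_eq_some_inl_iff] at h
        obtain ⟨i', j', he, hj'⟩ := h
        refine ⟨by simp, Or.inl ?_⟩
        rw [h1]
        obtain ⟨hi, hj⟩ := inr_eq_iff.mp he.symm
        omega
  | Sum.inr ⟨i, j⟩, Sum.inl _ =>
    have h1 : starRel r a (Sum.inl ()) (Sum.inr ⟨i, j⟩) = ((j : ℕ) = 0) := rfl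
    have h2 : starRel r a (Sum.inr ⟨i, j⟩) (Sum.inl ()) = False := rfl
    constructor
    · rintro ⟨hne, h | h⟩
      · rw [h2] at h; exact absurd h (by simp)
      · left
        rw [h1] at h
        exact pr_inr_zero h
    · rintro (h | h)
      · rw [pr_eq_some_inl_iff] at h
        obtain ⟨i', j', he, hj'⟩ := h
        refine ⟨by simp, Or.inr ?_⟩
        rw [h1]
        obtain ⟨hi, hj⟩ := inr_eq_iff.mp he.symm
        omega
      · simp [pr] at h
  | Sum.inr ⟨i, j⟩, Sum.inr ⟨i', j'⟩ =>
    have h1 : starRel r a (Sum.inr ⟨i, j⟩) (Sum.inr ⟨i', j'⟩)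
        = ((i : ℕ) = (i' : ℕ) ∧ (j : ℕ) + 1 = (j' : ℕ)) := rfl
    have h2 : starRel r a (Sum.inr ⟨i', j'⟩) (Sum.inr ⟨i, j⟩)
        = ((i' : ℕ) = (i : ℕ) ∧ (j' : ℕ) + 1 = (j : ℕ)) := rfl
    rw [pr_inr_eq_some_inr_iff, pr_inr_eq_some_inr_iff]
    constructor
    · rintro ⟨hne, h | h⟩
      · rw [h1] at h; right; omega
      · rw [h2] at h; left; omega
    · rintro (h | h)
      · refine ⟨?_, Or.inr (by rw [h2]; omega)⟩
        intro he
        obtain ⟨hi, hj⟩ := inr_eq_iff.mp he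
        omega
      · refine ⟨?_, Or.inl (by rw [h1]; omega)⟩
        intro he
        obtain ⟨hi, hj⟩ := inr_eq_iff.mp he
        omega

end StarAux

namespace StarAux

open Matrix

variable {r : ℕ} {a : Fin r → ℕ}

lemma dd_sq {u v : Vx r a} (h : pr u = some v) : dd u * dd u = 1 := by
  match u with
  | Sum.inl _ => simp [pr] at h
  | Sum.inr ⟨i, j⟩ =>
    show dd (Sum.inr ⟨i, j⟩ : Vx r a) * _ = 1
    rw [show dd (Sum.inr ⟨i, j⟩ : Vx r a) = if Even (a i - (j : ℕ)) then 1 else -1 from rfl]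
    by_cases he : Even (a i - (j : ℕ)) <;> simp [he]

lemma pr_ne_self (u : Vx r a) : pr u ≠ some u := fun h => by
  have := pr_ht h; omega

lemma pr_antisymm {u v : Vx r a} (h1 : pr u = some v) (h2 : pr v = some u) : False := by
  have := pr_ht h1; have := pr_ht h2; omega

/-- the strictly lower part of the congruence matrix -/
noncomputable def NN (r : ℕ) (a : Fin r → ℕ) : Matrix (Vx r a) (Vx r a) ℝ :=
  Matrix.of fun u v => if pr u = some v then -dd u else 0

/-- the unipotent congruence matrix -/
noncomputable def CC (r : ℕ) (a : Fin r → ℕ) : Matrix (Vx r a) (Vx r a) ℝ := 1 + NN r a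

lemma NN_apply (u v : Vx r a) : NN r a u v = if pr u = some v then -dd u else 0 := rfl

lemma NN_pow_ne {k : ℕ} {u v : Vx r a} (h : ((NN r a) ^ k) u v ≠ 0) : ht v + k ≤ ht u := by
  induction k generalizing u v with
  | zero =>
    simp only [pow_zero] at h
    rcases eq_or_ne u v with rfl | hne
    · omega
    · rw [Matrix.one_apply_ne hne] at h; exact absurd rfl h
  | succ k ih =>
    rw [pow_succ, Matrix.mul_apply] at h
    obtain ⟨w, -, hw⟩ := Finset.exists_ne_zero_of_sum_ne_zero h
    have h1 : ((NN r a) ^ k) u w ≠ 0 := fun hz => by simp [hz] at hw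
    have h2 : NN r a w v ≠ 0 := fun hz => by simp [hz] at hw
    rw [NN_apply] at h2
    have hp : pr w = some v := by
      by_contra hc; simp [hc] at h2
    have := pr_ht hp
    have := ih h1
    omega

lemma ht_le (u : Vx r a) : ht u ≤ ∑ i, a i := by
  match u with
  | Sum.inl _ => simp [ht]
  | Sum.inr ⟨i, j⟩ =>
    have h1 : (j : ℕ) + 1 ≤ a i := j.isLt
    have h2 : a i ≤ ∑ i, a i :=
      Finset.single_le_sum (fun i _ => Nat.zero_le (a i)) (Finset.mem_univ i)
    show (j : ℕ) + 1 ≤ _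
    omega

lemma NN_nilpotent : IsNilpotent (NN r a) := by
  refine ⟨(∑ i, a i) + 1, ?_⟩
  ext u v
  rw [Matrix.zero_apply]
  by_contra h
  have := NN_pow_ne h
  have := ht_le u
  omega

lemma CC_isUnit : IsUnit (CC r a) := NN_nilpotent.isUnit_one_add

end StarAux

namespace StarAux

open Matrix Finset

variable {r : ℕ} {a : Fin r → ℕ}

lemma sum_vx {M : Type*} [AddCommMonoid M] (f : Vx r a → M) :
    ∑ v, f v = f (Sum.inl ()) + ∑ i, ∑ j, f (Sum.inr ⟨i, j⟩) := by
  rw [Fintype.sum_sum_type]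
  congr 1
  · simp
  · rw [← Finset.univ_sigma_univ, Finset.sum_sigma]

lemma pr_eq_some_inr {w : Vx r a} {i : Fin r} {j : Fin (a i)}
    (h : pr w = some (Sum.inr ⟨i, j⟩)) :
    ∃ j' : Fin (a i), w = Sum.inr ⟨i, j'⟩ ∧ (j' : ℕ) = (j : ℕ) + 1 := by
  match w with
  | Sum.inl _ => simp [pr] at h
  | Sum.inr ⟨i', j'⟩ =>
    obtain ⟨h1, h2⟩ := pr_inr_eq_some_inr_iff.mp h
    obtain rfl : i' = i := Fin.ext h1
    exact ⟨j', rfl, h2⟩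

lemma center_sum {M : Type*} [AddCommMonoid M] (hpos : ∀ i, 1 ≤ a i) (f : Vx r a → M) :
    ∑ w, (if pr w = some (Sum.inl ()) then f w else 0)
      = ∑ i, f (Sum.inr ⟨i, ⟨0, hpos i⟩⟩) := by
  rw [sum_vx]
  have h0 : pr (Sum.inl () : Vx r a) = none := rfl
  rw [if_neg (by simp [h0])]
  rw [zero_add]
  apply Finset.sum_congr rfl
  intro i _
  have : ∀ j : Fin (a i), (if pr (Sum.inr ⟨i, j⟩ : Vx r a) = some (Sum.inl ()) then f (Sum.inr ⟨i, j⟩) else 0)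
      = if j = (⟨0, hpos i⟩ : Fin (a i)) then f (Sum.inr ⟨i, j⟩) else 0 := by
    intro j
    congr 1
    apply propext
    constructor
    · intro h
      obtain ⟨i', j', he, hj'⟩ := pr_eq_some_inl_iff.mp h
      obtain ⟨h1, h2⟩ := inr_eq_iff.mp he
      apply Fin.ext
      show (j : ℕ) = 0
      omega
    · intro h
      subst h
      exact pr_inr_zero rfl
  rw [Finset.sum_congr rfl (fun j _ => this j)]
  rw [Finset.sum_ite_eq' Finset.univ (⟨0, hpos i⟩ : Fin (a i)) (fun j => f (Sum.inr ⟨i, j⟩))]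
  simp

lemma children_sum {M : Type*} [AddCommMonoid M] (i : Fin r) (j : Fin (a i)) (f : Vx r a → M) :
    ∑ w, (if pr w = some (Sum.inr ⟨i, j⟩) then f w else 0)
      = if h : (j : ℕ) + 1 < a i then f (Sum.inr ⟨i, ⟨(j : ℕ) + 1, h⟩⟩) else 0 := by
  by_cases h : (j : ℕ) + 1 < a i
  · rw [dif_pos h]
    have hprb : pr (Sum.inr ⟨i, ⟨(j : ℕ) + 1, h⟩⟩ : Vx r a) = some (Sum.inr ⟨i, j⟩) := by
      apply pr_inr_eq_some_inr_iff.mpr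
      exact ⟨rfl, by simp⟩
    calc (∑ w, if pr w = some (Sum.inr ⟨i, j⟩) then f w else 0)
        = (if pr (Sum.inr ⟨i, ⟨(j : ℕ) + 1, h⟩⟩ : Vx r a) = some (Sum.inr ⟨i, j⟩)
            then f (Sum.inr ⟨i, ⟨(j : ℕ) + 1, h⟩⟩) else 0) := by
          apply Finset.sum_eq_single_of_mem _ (Finset.mem_univ _)
          intro w _ hw
          rw [if_neg]
          intro hc
          obtain ⟨j', rfl, hj'⟩ := pr_eq_some_inr hc
          exact hw (by rw [inr_eq_iff]; exact ⟨rfl, by simpa using hj'⟩)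
      _ = f (Sum.inr ⟨i, ⟨(j : ℕ) + 1, h⟩⟩) := by rw [if_pos hprb]
  · rw [dif_neg h]
    apply Finset.sum_eq_zero
    intro w _
    rw [if_neg]
    intro hc
    obtain ⟨j', rfl, hj'⟩ := pr_eq_some_inr hc
    have := j'.isLt
    omega

lemma dd_inr (i : Fin r) (j : Fin (a i)) :
    dd (Sum.inr ⟨i, j⟩ : Vx r a) = if Even (a i - (j : ℕ)) then 1 else -1 := rfl

lemma dd_pair {i : Fin r} {j : Fin (a i)} (h : (j : ℕ) + 1 < a i) :
    dd (Sum.inr ⟨i, j⟩ : Vx r a) + dd (Sum.inr ⟨i, ⟨(j : ℕ) + 1, h⟩⟩ : Vx r a) = 0 := by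
  rw [dd_inr, dd_inr]
  simp only [Fin.val_mk]
  have hstep : a i - (j : ℕ) = (a i - ((j : ℕ) + 1)) + 1 := by omega
  rcases Nat.even_or_odd (a i - ((j : ℕ) + 1)) with he | ho
  · have h2 : ¬ Even (a i - (j : ℕ)) := by
      rw [hstep, Nat.even_add_one]; simpa using he
    rw [if_neg h2, if_pos he]; ring
  · have h2 : Even (a i - (j : ℕ)) := by
      rw [hstep, Nat.even_add_one]; exact (Nat.not_even_iff_odd).mpr ho
    rw [if_pos h2, if_neg ((Nat.not_even_iff_odd).mpr ho)]; ring

lemma dd_leaf {i : Fin r} {j : Fin (a i)} (h : ¬ ((j : ℕ) + 1 < a i)) :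
    dd (Sum.inr ⟨i, j⟩ : Vx r a) = -1 := by
  have := j.isLt
  have h1 : a i - (j : ℕ) = 1 := by omega
  rw [dd_inr, h1, if_neg (by simp)]

end StarAux

namespace StarAux

open Matrix Finset

variable {r : ℕ} {a : Fin r → ℕ}

lemma deg_id (hpos : ∀ i, 1 ≤ a i)
    (hodd : ∃ i₀ : Fin r, Odd (a i₀) ∧ ∀ i, i ≠ i₀ → Even (a i)) (u : Vx r a) :
    ((starGraph r a).degree u : ℝ) - 2
      = dd u + ∑ w, (if pr w = some u then dd w else 0) := by
  classical
  rw [SimpleGraph.degree_eq_sum_if_adj]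
  have split : ∀ w, (if (starGraph r a).Adj u w then (1:ℝ) else 0)
      = (if pr u = some w then 1 else 0) + (if pr w = some u then 1 else 0) := by
    intro w
    by_cases h1 : pr u = some w
    · rw [if_pos (adj_iff.mpr (Or.inl h1)), if_pos h1,
        if_neg (fun h2 => pr_antisymm h1 h2)]
      ring
    · by_cases h2 : pr w = some u
      · rw [if_pos (adj_iff.mpr (Or.inr h2)), if_neg h1, if_pos h2]; ring
      · rw [if_neg (fun h => (adj_iff.mp h).elim h1 h2), if_neg h1, if_neg h2]; ring
  rw [Finset.sum_congr rfl (fun w _ => split w), Finset.sum_add_distrib]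
  match u with
  | Sum.inl _ =>
    have hnone : pr (Sum.inl () : Vx r a) = none := rfl
    have hfst : (∑ w : Vx r a, if pr (Sum.inl () : Vx r a) = some w then (1:ℝ) else 0) = 0 := by
      apply Finset.sum_eq_zero
      intro w _
      rw [if_neg (by simp [hnone])]
    rw [hfst, zero_add, center_sum hpos (fun _ => (1:ℝ)), center_sum hpos dd]
    have hdd0 : dd (Sum.inl () : Vx r a) = 0 := rfl
    rw [hdd0, zero_add, Finset.sum_const, Finset.card_univ, Fintype.card_fin]
    obtain ⟨i₀, hoddi, heven⟩ := hodd
    have hr1 : 1 ≤ r := i₀.pos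
    have hsum : ∑ i, dd (Sum.inr ⟨i, ⟨0, hpos i⟩⟩ : Vx r a)
        = ∑ i, (if i = i₀ then (-1:ℝ) else 1) := by
      apply Finset.sum_congr rfl
      intro i _
      rw [dd_inr]
      simp only [Fin.val_mk, Nat.sub_zero]
      by_cases hi : i = i₀
      · rw [if_pos hi, if_neg (by subst hi; exact Nat.not_even_iff_odd.mpr hoddi)]
      · rw [if_neg hi, if_pos (heven i hi)]
    have hsplit : ∀ i : Fin r, (if i = i₀ then (-1:ℝ) else 1)
        = 1 - (if i = i₀ then 2 else 0) := by
      intro i; by_cases h : i = i₀ <;> simp [h] <;> norm_num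
    rw [hsum, Finset.sum_congr rfl (fun i _ => hsplit i), Finset.sum_sub_distrib,
      Finset.sum_ite_eq' Finset.univ i₀ (fun _ => (2:ℝ)), if_pos (Finset.mem_univ i₀)]
    simp [nsmul_eq_mul]
  | Sum.inr ⟨i, j⟩ =>
    obtain ⟨p, hp⟩ : ∃ p, pr (Sum.inr ⟨i, j⟩ : Vx r a) = some p := by
      by_cases hj : (j : ℕ) = 0
      · exact ⟨_, pr_inr_zero hj⟩
      · exact ⟨_, pr_inr_pos hj⟩
    have hfst : (∑ w : Vx r a, if pr (Sum.inr ⟨i, j⟩ : Vx r a) = some w then (1:ℝ) else 0)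
        = 1 := by
      simp only [hp, Option.some_inj]
      rw [Finset.sum_ite_eq Finset.univ p (fun _ => (1:ℝ)), if_pos (Finset.mem_univ p)]
    rw [hfst, children_sum i j (fun _ => (1:ℝ)), children_sum i j dd]
    by_cases h : (j : ℕ) + 1 < a i
    · rw [dif_pos h, dif_pos h]
      have := dd_pair h
      linarith
    · rw [dif_neg h, dif_neg h, dd_leaf h]
      ring

end StarAux

namespace StarAux

open Matrix Finset

variable {r : ℕ} {a : Fin r → ℕ}

theorem key (hpos : ∀ i, 1 ≤ a i)
    (hodd : ∃ i₀ : Fin r, Odd (a i₀) ∧ ∀ i, i ≠ i₀ → Even (a i)) :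
    (starGraph r a).lapMatrix ℝ - (2:ℝ) • 1
      = (CC r a)ᵀ * (diagonal (dd : Vx r a → ℝ) * CC r a) := by
  classical
  have expand : (CC r a)ᵀ * (diagonal (dd : Vx r a → ℝ) * CC r a)
      = diagonal dd + diagonal dd * NN r a + (NN r a)ᵀ * diagonal dd
        + (NN r a)ᵀ * (diagonal dd * NN r a) := by
    rw [CC, transpose_add, transpose_one]
    noncomm_ring
  rw [expand]
  ext u v
  have hlap : (starGraph r a).lapMatrix ℝ u v
      = (if u = v then ((starGraph r a).degree u : ℝ) else 0)
        - (if (starGraph r a).Adj u v then 1 else 0) := by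
    rw [SimpleGraph.lapMatrix, Matrix.sub_apply, SimpleGraph.degMatrix,
      SimpleGraph.adjMatrix_apply, Matrix.diagonal_apply]
  rw [Matrix.sub_apply, hlap, Matrix.smul_apply, Matrix.one_apply, Matrix.add_apply,
    Matrix.add_apply, Matrix.add_apply, Matrix.diagonal_apply, Matrix.diagonal_mul,
    Matrix.mul_diagonal, Matrix.transpose_apply, Matrix.mul_apply, smul_eq_mul]
  have hcube : ∀ w : Vx r a, (NN r a)ᵀ u w * (diagonal (dd : Vx r a → ℝ) * NN r a) w v
      = if u = v then (if pr w = some u then dd w else 0) else 0 := by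
    intro w
    rw [Matrix.transpose_apply, Matrix.diagonal_mul, NN_apply, NN_apply]
    by_cases h1 : pr w = some u
    · by_cases h2 : pr w = some v
      · have huv : u = v := Option.some_inj.mp (h1.symm.trans h2)
        rw [if_pos h1, if_pos h2, if_pos huv, if_pos h1]
        have hsq := dd_sq h1
        have : -dd w * (dd w * -dd w) = dd w * (dd w * dd w) := by ring
        rw [this, hsq, mul_one]
      · have huv : u ≠ v := fun h => h2 (h ▸ h1)
        rw [if_pos h1, if_neg h2, if_neg huv]
        ring
    · rw [if_neg h1]
      by_cases huv : u = v
      · rw [if_pos huv, if_neg h1]; ring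
      · rw [if_neg huv]; ring
  rw [Finset.sum_congr rfl (fun w _ => hcube w)]
  by_cases huv : u = v
  · subst huv
    have hN : (NN r a) u u = 0 := by rw [NN_apply, if_neg (pr_ne_self u)]
    simp only [if_pos rfl, hN, mul_zero, zero_mul, add_zero, zero_add,
      eq_self_iff_true, if_true, if_neg ((starGraph r a).irrefl (v := u))]
    have hdeg := deg_id hpos hodd u
    linarith [hdeg]
  · simp only [if_neg huv, Finset.sum_const_zero, NN_apply]
    by_cases h1 : pr u = some v
    · rw [if_pos h1, if_neg (fun h2 => pr_antisymm h1 h2),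
        if_pos (adj_iff.mpr (Or.inl h1))]
      have h3 : dd u * -dd u = -1 := by
        have := dd_sq h1
        nlinarith
      rw [h3]
      ring
    · by_cases h2 : pr v = some u
      · rw [if_neg h1, if_pos h2, if_pos (adj_iff.mpr (Or.inr h2))]
        have h3 : -dd v * dd v = -1 := by
          have := dd_sq h2
          nlinarith
        rw [h3]
        ring
      · rw [if_neg h1, if_neg h2, if_neg (fun h => (adj_iff.mp h).elim h1 h2)]
        ring

end StarAux

namespace StarAux

open Matrix Finset

variable {r : ℕ} {a : Fin r → ℕ}

lemma count_range (m : ℕ) : (∑ j ∈ Finset.range m, if Even (j + 1) then 0 else 1) = (m + 1) / 2 := by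
  induction m with
  | zero => simp
  | succ m ih =>
    rw [Finset.sum_range_succ, ih]
    rcases Nat.even_or_odd (m + 1) with he | ho
    · rw [if_pos he]
      obtain ⟨k, hk⟩ := he
      omega
    · rw [if_neg (Nat.not_even_iff_odd.mpr ho)]
      obtain ⟨k, hk⟩ := ho
      omega

lemma count_fin (m : ℕ) : (∑ j : Fin m, if Even (m - (j : ℕ)) then 0 else 1) = (m + 1) / 2 := by
  rw [Fin.sum_univ_eq_sum_range (fun j => if Even (m - j) then 0 else 1) m]
  rw [← Finset.sum_range_reflect]
  rw [← count_range m]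
  apply Finset.sum_congr rfl
  intro j hj
  rw [Finset.mem_range] at hj
  congr 2
  omega

lemma count_dd (n : ℕ)
    (hodd : ∃ i₀ : Fin r, Odd (a i₀) ∧ ∀ i, i ≠ i₀ → Even (a i))
    (hn : n = 1 + ∑ i, a i) (hne : Even n) :
    (Finset.univ.filter (fun v : Vx r a => dd v < 0)).card = n / 2 := by
  classical
  obtain ⟨i₀, hoddi, heven⟩ := hodd
  have hcard : (Finset.univ.filter (fun v : Vx r a => dd v < 0)).card
      = ∑ i, (a i + 1) / 2 := by
    rw [Finset.card_filter]
    rw [sum_vx (fun v : Vx r a => if dd v < 0 then 1 else 0)]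
    have hc : (if dd (Sum.inl () : Vx r a) < 0 then 1 else 0) = 0 := by
      rw [if_neg]
      show ¬ (0:ℝ) < 0
      simp
    rw [hc, zero_add]
    apply Finset.sum_congr rfl
    intro i _
    rw [← count_fin (a i)]
    apply Finset.sum_congr rfl
    intro j _
    rw [dd_inr]
    by_cases he : Even (a i - (j : ℕ))
    · rw [if_pos he, if_pos he, if_neg (by norm_num)]
    · rw [if_neg he, if_neg he, if_pos (by norm_num)]
  have hdouble : ∀ i, 2 * ((a i + 1) / 2) = a i + (if i = i₀ then 1 else 0) := by
    intro i
    by_cases hi : i = i₀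
    · rw [if_pos hi]
      subst hi
      obtain ⟨k, hk⟩ := hoddi
      omega
    · rw [if_neg hi]
      obtain ⟨k, hk⟩ := heven i hi
      omega
  have h2 : 2 * ((Finset.univ.filter (fun v : Vx r a => dd v < 0)).card) = n := by
    rw [hcard, Finset.mul_sum, Finset.sum_congr rfl (fun i _ => hdouble i),
      Finset.sum_add_distrib, Finset.sum_ite_eq' Finset.univ i₀ (fun _ => 1),
      if_pos (Finset.mem_univ i₀), hn]
    omega
  obtain ⟨k, hk⟩ := hne
  omega

end StarAux

/-- For a starlike tree on `n` vertices whose central vertex is adjacent to one end of each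
of `r ≥ 3` paths, all but one of which have an even number of vertices (`n` even), exactly
`n/2` Laplacian eigenvalues are greater than or equal to `2`. -/
theorem starlike_eigenvalues_ge_two (r n : ℕ) (a : Fin r → ℕ) (hr : 3 ≤ r)
    (hpos : ∀ i, 1 ≤ a i)
    (hodd : ∃ i₀ : Fin r, Odd (a i₀) ∧ ∀ i, i ≠ i₀ → Even (a i))
    (hn : n = 1 + ∑ i, a i) (hne : Even n) :
    Multiset.card ((((starGraph r a).lapMatrix ℝ).charpoly.roots).filter
        (fun μ => (2 : ℝ) ≤ μ)) = n / 2 := by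
  classical
  open Matrix StarAux in
  have hL : ((starGraph r a).lapMatrix ℝ).IsHermitian :=
    (SimpleGraph.posSemidef_lapMatrix ℝ (starGraph r a)).1
  set ev : StarAux.Vx r a → ℝ := hL.eigenvalues with hev
  have hroots : ((starGraph r a).lapMatrix ℝ).charpoly.roots = Finset.univ.val.map ev :=
    roots_charpoly_hermitian _ hL
  set U : Matrix (StarAux.Vx r a) (StarAux.Vx r a) ℝ :=
    (hL.eigenvectorUnitary : Matrix (StarAux.Vx r a) (StarAux.Vx r a) ℝ) with hU
  have hU1 : star U * U = 1 := (Unitary.mem_iff.mp (hL.eigenvectorUnitary).2).1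
  have hU2 : U * star U = 1 := (Unitary.mem_iff.mp (hL.eigenvectorUnitary).2).2
  have hdiag : star U * (starGraph r a).lapMatrix ℝ * U = Matrix.diagonal ev := by
    have h := hL.conjStarAlgAut_star_eigenvectorUnitary
    rw [Unitary.conjStarAlgAut_star_apply] at h
    have hco : (RCLike.ofReal ∘ hL.eigenvalues : StarAux.Vx r a → ℝ) = ev := by
      funext i; simp [hev]
    rw [← hco]
    exact h
  have hsmul : star U * ((2:ℝ) • (1 : Matrix (StarAux.Vx r a) (StarAux.Vx r a) ℝ)) * U
      = (2:ℝ) • (1 : Matrix (StarAux.Vx r a) (StarAux.Vx r a) ℝ) := by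
    rw [Matrix.mul_smul, mul_one, Matrix.smul_mul, hU1]
  have hkey := StarAux.key (r := r) (a := a) hpos hodd
  have hstT : star U = Uᵀ := by
    rw [Matrix.star_eq_conjTranspose, Matrix.conjTranspose_eq_transpose_of_trivial]
  have hshift : Matrix.diagonal (fun i => ev i - 2)
      = (StarAux.CC r a * U)ᵀ * Matrix.diagonal (StarAux.dd : StarAux.Vx r a → ℝ)
        * (StarAux.CC r a * U) := by
    have h1 : Matrix.diagonal (fun i => ev i - 2)
        = Matrix.diagonal ev - (2:ℝ) • (1 : Matrix (StarAux.Vx r a) (StarAux.Vx r a) ℝ) := by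
      ext i j
      by_cases h : i = j
      · subst h
        simp [Matrix.diagonal_apply_eq, Matrix.one_apply_eq]
      · simp [Matrix.diagonal_apply_ne _ h, Matrix.one_apply_ne h]
    rw [h1, ← hdiag, ← hsmul]
    rw [show star U * ((starGraph r a).lapMatrix ℝ) * U
          - star U * ((2:ℝ) • (1 : Matrix (StarAux.Vx r a) (StarAux.Vx r a) ℝ)) * U
        = star U * ((starGraph r a).lapMatrix ℝ
          - (2:ℝ) • (1 : Matrix (StarAux.Vx r a) (StarAux.Vx r a) ℝ)) * U by noncomm_ring]
    rw [hkey, Matrix.transpose_mul, hstT]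
    noncomm_ring
  have hBunit : IsUnit (StarAux.CC r a * U) := by
    refine (StarAux.CC_isUnit).mul ?_
    rw [Matrix.isUnit_iff_isUnit_det]
    have hdet : U.det * (star U).det = 1 := by
      rw [← Matrix.det_mul, hU2, Matrix.det_one]
    exact IsUnit.of_mul_eq_one _ hdet
  have hin := inertia_eq (fun i => ev i - 2) (StarAux.dd : StarAux.Vx r a → ℝ)
    (StarAux.CC r a * U) hBunit hshift
  have hddcount := StarAux.count_dd (r := r) (a := a) n hodd hn hne
  have hcardV : Fintype.card (StarAux.Vx r a) = n := by
    simp [hn]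
  have hlt : (Finset.univ.filter (fun i : StarAux.Vx r a => ev i - 2 < 0)).card = n / 2 := by
    rw [hin, hddcount]
  have hsplit := Finset.card_filter_add_card_filter_not
      (s := (Finset.univ : Finset (StarAux.Vx r a))) (p := fun i => ev i - 2 < 0)
  rw [Finset.card_univ, hcardV] at hsplit
  have hfilter_eq : (Finset.univ.filter (fun i : StarAux.Vx r a => ¬ (ev i - 2 < 0)))
      = Finset.univ.filter (fun i : StarAux.Vx r a => 2 ≤ ev i) := by
    apply Finset.filter_congr
    intro i _
    constructor
    · intro h; linarith [not_lt.mp h]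
    · intro h; intro hc; linarith
  rw [hroots]
  have hm : Multiset.card (Multiset.filter (fun μ => (2:ℝ) ≤ μ) (Multiset.map ev Finset.univ.val))
      = (Finset.univ.filter (fun i : StarAux.Vx r a => 2 ≤ ev i)).card := by
    rw [Multiset.filter_map, Multiset.card_map]
    rfl
  rw [hm]
  rw [← hfilter_eq]
  obtain ⟨k, hk⟩ := hne
  omega
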